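/- (Milnor–Wood inequality, formulation for flat circle bundles; Wood.) Let g ≥ 1 and let a₁, b₁, …, a_g, b_g be lifts of orientation-preserving circle homeomorphisms, i.e. strictly increasing homeomorphisms f : ℝ → ℝ satisfying f(x + 1) = f(x) + 1 for all x (the invertible elements of the monoid of degree-one lifts). Suppose the product of commutators [a₁,b₁]·[a₂,b₂]···[a_g,b_g] equals the translation x ↦ x + n for some integer n (so the underlying circle homeomorphisms satisfy the genus-g surface group relation, and n is the Euler number of the associated flat circle bundle). Then |n| ≤ 2g − 2. (This is the paper's inequality |Euler(ρ)| ≤ −χ(Σ) for flat oriented circle bundles over a closed oriented surface of genus g.) -/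

import Mathlib

open CircleDeg1Lift Multiplicative

open scoped commutatorElement

local notation "τ" => CircleDeg1Lift.translationNumber

namespace MilnorWoodAux

lemma unit_continuous (u : CircleDeg1Liftˣ) : Continuous (u : CircleDeg1Lift) :=
  (continuous_iff_surjective _).mpr (isUnit_iff_bijective.mp u.isUnit).surjective

lemma tau_mul_le (f : CircleDeg1Lift) (g : CircleDeg1Liftˣ) (c : ℤ)
    (h : τ f + τ (g : CircleDeg1Lift) ≤ c) : τ (f * (g : CircleDeg1Lift)) ≤ c + 1 := by
  obtain ⟨x, hx⟩ := (g : CircleDeg1Lift).exists_eq_add_translationNumber (unit_continuous g)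
  have h1 : (f * (g : CircleDeg1Lift)) x ≤ x + ((c + 1 : ℤ) : ℝ) := by
    have h2 := f.map_lt_add_translationNumber_add_one ((g : CircleDeg1Lift) x)
    rw [mul_apply, hx]
    rw [hx] at h2
    push_cast
    linarith
  have := translationNumber_le_of_le_add_int (f * (g : CircleDeg1Lift)) h1
  push_cast at this ⊢
  linarith

lemma lt_map_unit (u : CircleDeg1Liftˣ) (x : ℝ) :
    x + τ (u : CircleDeg1Lift) - 1 < (u : CircleDeg1Lift) x := by
  have h := ((u⁻¹ : CircleDeg1Liftˣ) : CircleDeg1Lift).map_lt_add_translationNumber_add_one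
    ((u : CircleDeg1Lift) x)
  rw [translationNumber_units_inv] at h
  have h2 : ((u⁻¹ : CircleDeg1Liftˣ) : CircleDeg1Lift) ((u : CircleDeg1Lift) x) = x :=
    units_inv_apply_apply u x
  rw [h2] at h
  linarith

lemma tau_mul_ge (f g : CircleDeg1Liftˣ) (c : ℤ)
    (h : (c : ℝ) ≤ τ (f : CircleDeg1Lift) + τ (g : CircleDeg1Lift)) :
    (c : ℝ) - 1 ≤ τ ((f : CircleDeg1Lift) * (g : CircleDeg1Lift)) := by
  obtain ⟨x, hx⟩ := (g : CircleDeg1Lift).exists_eq_add_translationNumber (unit_continuous g)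
  have h1 : x + ((c - 1 : ℤ) : ℝ) ≤ ((f : CircleDeg1Lift) * (g : CircleDeg1Lift)) x := by
    have h2 := lt_map_unit f ((g : CircleDeg1Lift) x)
    rw [mul_apply]
    rw [hx] at h2 ⊢
    push_cast
    linarith
  have := le_translationNumber_of_add_int_le ((f : CircleDeg1Lift) * (g : CircleDeg1Lift)) h1
  push_cast at this ⊢
  linarith

lemma tau_comm_le (A B : CircleDeg1Liftˣ) :
    τ ((⁅A, B⁆ : CircleDeg1Liftˣ) : CircleDeg1Lift) ≤ 1 := by
  have hval : ((⁅A, B⁆ : CircleDeg1Liftˣ) : CircleDeg1Lift)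
      = ((A * B * A⁻¹ : CircleDeg1Liftˣ) : CircleDeg1Lift)
        * ((B⁻¹ : CircleDeg1Liftˣ) : CircleDeg1Lift) := by
    rw [commutatorElement_def, Units.val_mul]
  have hc : τ ((A * B * A⁻¹ : CircleDeg1Liftˣ) : CircleDeg1Lift)
      + τ ((B⁻¹ : CircleDeg1Liftˣ) : CircleDeg1Lift) ≤ ((0 : ℤ) : ℝ) := by
    have h1 : ((A * B * A⁻¹ : CircleDeg1Liftˣ) : CircleDeg1Lift)
        = (A : CircleDeg1Lift) * (B : CircleDeg1Lift)
          * ((A⁻¹ : CircleDeg1Liftˣ) : CircleDeg1Lift) := by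
      rw [Units.val_mul, Units.val_mul]
    rw [h1, translationNumber_conj_eq, translationNumber_units_inv]
    simp
  have := tau_mul_le _ (B⁻¹) 0 hc
  rw [← hval] at this
  simpa using this

lemma abs_tau_comm (A B : CircleDeg1Liftˣ) :
    |τ ((⁅A, B⁆ : CircleDeg1Liftˣ) : CircleDeg1Lift)| ≤ 1 := by
  rw [abs_le]
  refine ⟨?_, tau_comm_le A B⟩
  have h := tau_comm_le B A
  have h2 : τ ((⁅A, B⁆⁻¹ : CircleDeg1Liftˣ) : CircleDeg1Lift)
      = -τ ((⁅A, B⁆ : CircleDeg1Liftˣ) : CircleDeg1Lift) := translationNumber_units_inv _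
  rw [commutatorElement_inv] at h2
  rw [h2] at h
  linarith

lemma tau_prod (l : List CircleDeg1Liftˣ)
    (hl : ∀ u ∈ l, |τ (u : CircleDeg1Lift)| ≤ 1) (hne : l ≠ []) :
    |τ ((l.prod : CircleDeg1Liftˣ) : CircleDeg1Lift)| ≤ 2 * l.length - 1 := by
  induction l with
  | nil => exact absurd rfl hne
  | cons u t ih =>
    rcases eq_or_ne t [] with rfl | ht
    · simp only [List.prod_cons, List.prod_nil, mul_one, List.length_cons, List.length_nil]
      norm_num
      exact hl u (by simp)
    · have hu : |τ (u : CircleDeg1Lift)| ≤ 1 := hl u (by simp)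
      have htp := ih (fun v hv => hl v (by simp [hv])) ht
      have hlen : (1 : ℝ) ≤ t.length := by
        have : 1 ≤ t.length := List.length_pos_iff.mpr ht
        exact_mod_cast this
      rw [abs_le] at hu htp ⊢
      have hval : (((u :: t).prod : CircleDeg1Liftˣ) : CircleDeg1Lift)
          = (u : CircleDeg1Lift) * ((t.prod : CircleDeg1Liftˣ) : CircleDeg1Lift) := by
        rw [List.prod_cons, Units.val_mul]
      constructor
      · have hge := tau_mul_ge u t.prod (-(2 * t.length)) (by push_cast; linarith [hu.1, htp.1])
        rw [← hval] at hge
        push_cast at hge ⊢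
        simp only [List.length_cons]
        push_cast
        linarith
      · have hle := tau_mul_le (u : CircleDeg1Lift) t.prod (2 * t.length)
          (by push_cast; linarith [hu.2, htp.2])
        rw [← hval] at hle
        push_cast at hle ⊢
        simp only [List.length_cons]
        push_cast
        linarith

lemma translate_commute (u : CircleDeg1Liftˣ) (n : ℤ) :
    Commute ((translate (ofAdd (n : ℝ)) : CircleDeg1Liftˣ) : CircleDeg1Lift)
      (u : CircleDeg1Lift) := by
  rw [commute_iff_commute]
  have hfn : ⇑((translate (ofAdd (n : ℝ)) : CircleDeg1Liftˣ) : CircleDeg1Lift)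
      = fun y : ℝ => (n : ℝ) + y := rfl
  rw [hfn]
  exact ((u : CircleDeg1Lift).commute_int_add n).symm

end MilnorWoodAux

open MilnorWoodAux

/-- **Milnor–Wood inequality (Wood).** If lifts `a₁, b₁, …, a_g, b_g` of
orientation-preserving circle homeomorphisms (units of the monoid of degree-one
lifts) satisfy `[a₁,b₁]⋯[a_g,b_g] = (x ↦ x + n)` for some integer `n`, then
`|n| ≤ 2g − 2`. -/
theorem milnor_wood_inequality (g : ℕ) (hg : 1 ≤ g)
    (a b : Fin g → CircleDeg1Liftˣ) (n : ℤ)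
    (h : ∀ x : ℝ,
      (((List.ofFn fun i => ⁅a i, b i⁆).prod : CircleDeg1Liftˣ) : CircleDeg1Lift) x = x + n) :
    |n| ≤ 2 * (g : ℤ) - 2 := by
  match g, hg, a, b, h with
  | 1, _, a, b, h =>
    -- genus one: the relation forces `n = 0`
    have hP1 : (List.ofFn fun i => ⁅a i, b i⁆).prod = ⁅a 0, b 0⁆ := by
      simp [List.ofFn_succ]
    have hPT : (⁅a 0, b 0⁆ : CircleDeg1Liftˣ) = translate (ofAdd (n : ℝ)) := by
      rw [← hP1]; ext x
      rw [h x, CircleDeg1Lift.translate_apply, add_comm]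
    have key : a 0 * b 0 = translate (ofAdd (n : ℝ)) * (b 0 * a 0) := by
      rw [← hPT, commutatorElement_def]
      group
    have h1 : τ ((a 0 * b 0 : CircleDeg1Liftˣ) : CircleDeg1Lift)
        = (n : ℝ) + τ ((b 0 * a 0 : CircleDeg1Liftˣ) : CircleDeg1Lift) := by
      rw [key, Units.val_mul, translationNumber_mul_of_commute (translate_commute _ n),
        translationNumber_translate]
    have h2 : τ ((b 0 * a 0 : CircleDeg1Liftˣ) : CircleDeg1Lift)
        = τ ((a 0 * b 0 : CircleDeg1Liftˣ) : CircleDeg1Lift) := by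
      have hba : (b 0 * a 0 : CircleDeg1Liftˣ) = (a 0)⁻¹ * (a 0 * b 0) * a 0 := by group
      rw [hba, Units.val_mul, Units.val_mul, translationNumber_conj_eq']
    have hn0 : (n : ℝ) = 0 := by rw [h2] at h1; linarith
    have hn : n = 0 := by exact_mod_cast hn0
    rw [hn]
    norm_num
  | (k + 2), _, a, b, h =>
    set C : CircleDeg1Liftˣ := ⁅a 0, b 0⁆ with hC
    set t : List CircleDeg1Liftˣ := List.ofFn fun i : Fin (k + 1) => ⁅a i.succ, b i.succ⁆
      with htdef
    have hsplit : (List.ofFn fun i => ⁅a i, b i⁆).prod = C * t.prod := by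
      rw [List.ofFn_succ, List.prod_cons]
    have hPT : (C * t.prod : CircleDeg1Liftˣ) = translate (ofAdd (n : ℝ)) := by
      rw [← hsplit]; ext x
      rw [h x, CircleDeg1Lift.translate_apply, add_comm]
    have hR : t.prod = C⁻¹ * translate (ofAdd (n : ℝ)) := by
      rw [← hPT]; group
    have habsC : |τ ((C : CircleDeg1Liftˣ) : CircleDeg1Lift)| ≤ 1 := abs_tau_comm _ _
    have habsR : |τ ((t.prod : CircleDeg1Liftˣ) : CircleDeg1Lift)| ≤ 2 * t.length - 1 := by
      refine tau_prod t ?_ ?_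
      · intro u hu
        rw [htdef, List.mem_ofFn] at hu
        obtain ⟨i, rfl⟩ := hu
        exact abs_tau_comm _ _
      · rw [htdef, List.ofFn_succ]
        exact List.cons_ne_nil _ _
    have hlen : t.length = k + 1 := by rw [htdef]; simp
    have hτR : τ ((t.prod : CircleDeg1Liftˣ) : CircleDeg1Lift)
        = -τ ((C : CircleDeg1Liftˣ) : CircleDeg1Lift) + n := by
      rw [hR, Units.val_mul, translationNumber_mul_of_commute (translate_commute _ n).symm,
        translationNumber_units_inv, translationNumber_translate]
    have hreal : |(n : ℝ)| ≤ 2 * ((k : ℝ) + 2) - 2 := by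
      have hn : (n : ℝ) = τ ((C : CircleDeg1Liftˣ) : CircleDeg1Lift)
          + τ ((t.prod : CircleDeg1Liftˣ) : CircleDeg1Lift) := by rw [hτR]; ring
      rw [hn]
      rw [hlen] at habsR
      have h1 := abs_add_le (τ ((C : CircleDeg1Liftˣ) : CircleDeg1Lift))
        (τ ((t.prod : CircleDeg1Liftˣ) : CircleDeg1Lift))
      push_cast at habsR ⊢
      linarith [abs_le.mp habsC, abs_le.mp habsR, abs_le.mp (le_refl |(n:ℝ)|)]
    have hfin : |n| ≤ 2 * ((k : ℤ) + 2) - 2 := by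
      rw [← Int.cast_abs] at hreal
      exact_mod_cast hreal
    push_cast
    linarith [hfin]
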